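/- Let p be a prime, n ≥ 2, m ≥ 1, and M = m(n²−n)+1. Let G be a group and γ₁, …, γ_n : G → (ℤ/p^Mℤ)ˣ homomorphisms; for i ≠ j set γ_{i,j} := γ_i γ_j^{−1}. Assume: for each pair i ≠ j there exists g ∈ G with γ_{i,j}(g) − 1 not divisible by p^m in ℤ/p^Mℤ, and for any two distinct pairs (i,j) ≠ (s,t) with i ≠ j, s ≠ t there exists g ∈ G with γ_{s,t}(g) − γ_{i,j}(g) not divisible by p^m. Let D(g) := diag(γ₁(g), …, γ_n(g)) ∈ GL_n(ℤ/p^Mℤ) and let ℳ ⊆ M_n(ℤ/p^Mℤ) be a ℤ/p^Mℤ-submodule with D(g)·ℳ·D(g)^{−1} ⊆ ℳ for all g ∈ G. Then for every x ∈ ℳ, writing x₀ for the diagonal matrix whose diagonal entries agree with those of x, one has p^{m(n²−n)}·x₀ ∈ ℳ. -/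

import Mathlib

lemma aux_dvd_stmt8 {p M m : ℕ} (hp : p.Prime) (hM : 0 < M) (y : ZMod (p ^ M))
    (h : ¬ ((p : ZMod (p ^ M)) ^ m ∣ y)) :
    ∃ c : ZMod (p ^ M), c * y = (p : ZMod (p ^ M)) ^ m := by
  haveI : NeZero (p ^ M) := ⟨pow_ne_zero M hp.pos.ne'⟩
  have hyval : y.val ≠ 0 := by
    intro h0
    apply h
    have hy0 : y = 0 := by rwa [ZMod.val_eq_zero] at h0
    simp [hy0]
  have hycast : ((y.val : ℕ) : ZMod (p ^ M)) = y := by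
    simp [ZMod.natCast_val, ZMod.cast_id]
  set k := (y.val).factorization p with hk
  have hkm : k < m := by
    by_contra hge
    push_neg at hge
    apply h
    have h1 : p ^ m ∣ y.val := dvd_trans (pow_dvd_pow p hge) (Nat.ordProj_dvd _ _)
    obtain ⟨c, hc⟩ := h1
    refine ⟨(c : ZMod (p ^ M)), ?_⟩
    rw [← hycast, hc]
    push_cast
    ring
  set u := y.val / p ^ k with hu
  have hmul : p ^ k * u = y.val := Nat.ordProj_mul_ordCompl_eq_self _ _
  have hnd : ¬ p ∣ u := Nat.not_dvd_ordCompl hp hyval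
  have hcop : Nat.Coprime u (p ^ M) :=
    Nat.Coprime.pow_right _ (Nat.coprime_comm.mp ((hp.coprime_iff_not_dvd).mpr hnd))
  have hunit : IsUnit (u : ZMod (p ^ M)) := (ZMod.isUnit_iff_coprime u (p ^ M)).mpr hcop
  obtain ⟨w, hw⟩ := hunit
  refine ⟨(p : ZMod (p ^ M)) ^ (m - k) * (↑w⁻¹ : ZMod (p ^ M)), ?_⟩
  have hy : y = (p : ZMod (p ^ M)) ^ k * (u : ZMod (p ^ M)) := by
    rw [← hycast, ← hmul]; push_cast; ring
  have hwu : (↑w⁻¹ : ZMod (p ^ M)) * (u : ZMod (p ^ M)) = 1 := by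
    rw [← hw]; exact w.inv_mul
  rw [hy]
  calc (p : ZMod (p ^ M)) ^ (m - k) * (↑w⁻¹ : ZMod (p ^ M)) *
      ((p : ZMod (p ^ M)) ^ k * (u : ZMod (p ^ M)))
      = (p : ZMod (p ^ M)) ^ (m - k) * (p : ZMod (p ^ M)) ^ k *
        ((↑w⁻¹ : ZMod (p ^ M)) * (u : ZMod (p ^ M))) := by ring
    _ = (p : ZMod (p ^ M)) ^ m := by
        rw [hwu, mul_one, ← pow_add, Nat.sub_add_cancel hkm.le]

theorem stmt_8 (p n m M : ℕ) (hp : p.Prime) (hn : 2 ≤ n) (hm : 1 ≤ m)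
    (hM : M = m * (n ^ 2 - n) + 1)
    {G : Type*} [Group G] (γ : Fin n → G →* (ZMod (p ^ M))ˣ)
    (hnontriv : ∀ i j : Fin n, i ≠ j → ∃ g : G,
      ¬ ((p : ZMod (p ^ M)) ^ m ∣
        ((γ i g : ZMod (p ^ M)) * (((γ j g)⁻¹ : (ZMod (p ^ M))ˣ) : ZMod (p ^ M)) - 1)))
    (hdist : ∀ i j s t : Fin n, i ≠ j → s ≠ t → (i, j) ≠ (s, t) → ∃ g : G,
      ¬ ((p : ZMod (p ^ M)) ^ m ∣
        ((γ s g : ZMod (p ^ M)) * (((γ t g)⁻¹ : (ZMod (p ^ M))ˣ) : ZMod (p ^ M)) -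
         (γ i g : ZMod (p ^ M)) * (((γ j g)⁻¹ : (ZMod (p ^ M))ˣ) : ZMod (p ^ M)))))
    (ℳ : Submodule (ZMod (p ^ M)) (Matrix (Fin n) (Fin n) (ZMod (p ^ M))))
    (hstab : ∀ g : G, ∀ x ∈ ℳ,
      Matrix.diagonal (fun i => (γ i g : ZMod (p ^ M))) * x *
      Matrix.diagonal (fun i => (((γ i g)⁻¹ : (ZMod (p ^ M))ˣ) : ZMod (p ^ M))) ∈ ℳ)
    (x : Matrix (Fin n) (Fin n) (ZMod (p ^ M))) (hx : x ∈ ℳ) :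
    ((p : ZMod (p ^ M)) ^ (m * (n ^ 2 - n))) •
      Matrix.diagonal (fun i => x i i) ∈ ℳ := by
  have hM0 : 0 < M := by omega
  -- key induction over a list of off-diagonal pairs
  have key : ∀ L : List (Fin n × Fin n), (∀ q ∈ L, q.1 ≠ q.2) →
      ∃ y ∈ ℳ, (∀ i : Fin n, y i i = (p : ZMod (p ^ M)) ^ (m * L.length) * x i i) ∧
        (∀ q ∈ L, y q.1 q.2 = 0) := by
    intro L
    induction L with
    | nil => intro _; exact ⟨x, hx, by simp, by simp⟩
    | cons q L ih =>
      intro hL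
      obtain ⟨y, hyM, hyd, hyz⟩ := ih (fun r hr => hL r (List.mem_cons_of_mem _ hr))
      have hq : q.1 ≠ q.2 := hL q (List.mem_cons_self)
      obtain ⟨g, hg⟩ := hnontriv q.1 q.2 hq
      set a : ZMod (p ^ M) :=
        (γ q.1 g : ZMod (p ^ M)) * (((γ q.2 g)⁻¹ : (ZMod (p ^ M))ˣ) : ZMod (p ^ M)) with ha
      have hg' : ¬ ((p : ZMod (p ^ M)) ^ m ∣ (1 - a)) := by
        rintro ⟨c, hc⟩
        exact hg ⟨-c, by rw [← neg_sub, hc]; ring⟩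
      obtain ⟨c, hc⟩ := aux_dvd_stmt8 hp hM0 _ hg'
      set z := Matrix.diagonal (fun i => (γ i g : ZMod (p ^ M))) * y *
        Matrix.diagonal (fun i => (((γ i g)⁻¹ : (ZMod (p ^ M))ˣ) : ZMod (p ^ M))) with hz
      have hzE : ∀ s t : Fin n, z s t =
          (γ s g : ZMod (p ^ M)) * (((γ t g)⁻¹ : (ZMod (p ^ M))ˣ) : ZMod (p ^ M)) * y s t := by
        intro s t
        simp [hz, Matrix.mul_diagonal, Matrix.diagonal_mul]
        ring
      refine ⟨c • (z - a • y), ?_, ?_, ?_⟩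
      · exact Submodule.smul_mem _ _
          (Submodule.sub_mem _ (hstab g y hyM) (Submodule.smul_mem _ _ hyM))
      · intro i
        have hone : (γ i g : ZMod (p ^ M)) * (((γ i g)⁻¹ : (ZMod (p ^ M))ˣ) : ZMod (p ^ M)) = 1 := by
          rw [← Units.val_mul, mul_inv_cancel, Units.val_one]
        have : (c • (z - a • y)) i i = c * (z i i - a * y i i) := by
          simp [Matrix.smul_apply, Matrix.sub_apply]
        rw [this, hzE i i, hone, one_mul, hyd i]
        have hlen : m * (q :: L).length = m + m * L.length := by
          simp [List.length_cons]; ring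
        rw [hlen, pow_add]
        calc c * ((p : ZMod (p ^ M)) ^ (m * L.length) * x i i -
              a * ((p : ZMod (p ^ M)) ^ (m * L.length) * x i i))
            = (c * (1 - a)) * ((p : ZMod (p ^ M)) ^ (m * L.length) * x i i) := by ring
          _ = (p : ZMod (p ^ M)) ^ m * ((p : ZMod (p ^ M)) ^ (m * L.length) * x i i) := by rw [hc]
          _ = (p : ZMod (p ^ M)) ^ m * (p : ZMod (p ^ M)) ^ (m * L.length) * x i i := by ring
      · intro r hr
        have hE : (c • (z - a • y)) r.1 r.2 = c * (z r.1 r.2 - a * y r.1 r.2) := by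
          simp [Matrix.smul_apply, Matrix.sub_apply]
        rcases List.mem_cons.mp hr with h1 | h2
        · subst h1
          rw [hE, hzE, ← ha]
          ring
        · rw [hE, hzE, hyz r h2]
          ring
  -- apply to the list of all off-diagonal pairs
  set L := ((Finset.univ : Finset (Fin n × Fin n)).filter fun q => q.1 ≠ q.2).toList with hLdef
  have hLmem : ∀ q : Fin n × Fin n, q ∈ L ↔ q.1 ≠ q.2 := by
    intro q
    simp [hLdef, Finset.mem_toList, Finset.mem_filter]
  have hcard_eq : ((Finset.univ : Finset (Fin n × Fin n)).filter fun q => q.1 = q.2).card = n := by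
    have himg : ((Finset.univ : Finset (Fin n × Fin n)).filter fun q => q.1 = q.2) =
        Finset.image (fun i : Fin n => (i, i)) Finset.univ := by
      ext q
      simp only [Finset.mem_filter, Finset.mem_univ, true_and, Finset.mem_image]
      constructor
      · intro h; exact ⟨q.1, by obtain ⟨q1, q2⟩ := q; simp_all⟩
      · rintro ⟨i, rfl⟩; rfl
    rw [himg, Finset.card_image_of_injective _ (fun i j h => (Prod.ext_iff.mp h).1),
      Finset.card_univ, Fintype.card_fin]
  have hLlen : L.length = n ^ 2 - n := by
    have htot := Finset.card_filter_add_card_filter_not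
      (s := (Finset.univ : Finset (Fin n × Fin n))) (p := fun q => q.1 = q.2)
    have huniv : (Finset.univ : Finset (Fin n × Fin n)).card = n * n := by
      simp [Finset.card_univ]
    have hlen : L.length = ((Finset.univ : Finset (Fin n × Fin n)).filter
        fun q => ¬ q.1 = q.2).card := Finset.length_toList _
    have hsq : n ^ 2 = n * n := sq n
    omega
  obtain ⟨y, hyM, hyd, hyz⟩ := key L (fun q hq => (hLmem q).mp hq)
  have : ((p : ZMod (p ^ M)) ^ (m * (n ^ 2 - n))) •
      Matrix.diagonal (fun i => x i i) = y := by
    ext s t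
    by_cases hst : s = t
    · subst hst
      rw [hyd s]
      simp [Matrix.smul_apply, Matrix.diagonal_apply_eq, hLlen]
    · have h0 : y s t = 0 := hyz (s, t) ((hLmem (s, t)).mpr hst)
      rw [h0]
      simp [Matrix.smul_apply, Matrix.diagonal_apply_ne _ hst]
  rw [this]
  exact hyM
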